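/- In the graph G, every vertex subset S minimizing the quotient over all ∅≠S⊊V, and every S minimizing the sparsity over all ∅≠S⊊V, separates u from v (i.e., exactly one of u,v lies in S); moreover its cut contains none of the edges e_A, e_B, e_C and contains exactly one edge from each of the paths P_A, P_B, P_C. -/
import Mathlib


open Finset

namespace SCLB

inductive V (n : ℕ) : Type
  | u : V n
  | v : V n
  | A : Fin n → V n
  | B : Fin n → V n
  | C : Fin n → V n
  deriving DecidableEq, Fintype

/-- Edges: `(p, some i)` is the `i`-th edge (0-indexed) on path `p` (`p = 0,1,2` for
`P_A, P_B, P_C`), joining the `(i+1)`-st path vertex to the next one; `(p, none)` is the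
special edge `e_A`, `e_B`, `e_C` respectively. -/
abbrev E (n : ℕ) := Fin 3 × Option (Fin n)

def Tsum (n : ℕ) (a b c : Fin n → ℕ) : ℕ := ∑ i, (a i + b i + c i)

def beta (n : ℕ) (a b c : Fin n → ℕ) : ℕ := 4 * Tsum n a b c * n ^ 2

def firstV {n : ℕ} (f : Fin n → V n) (dflt : V n) : V n :=
  if h : 0 < n then f ⟨0, h⟩ else dflt

def nextV {n : ℕ} (f : Fin n → V n) (top : V n) (i : Fin n) : V n :=
  if h : i.val + 1 < n then f ⟨i.val + 1, h⟩ else top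

/-- The two endpoints of each edge. -/
def ends (n : ℕ) : E n → V n × V n
  | (p, none) =>
      if p = 0 then (V.v, firstV V.A V.u)
      else if p = 1 then (V.v, firstV V.B V.u)
      else (V.u, firstV V.C V.v)
  | (p, some i) =>
      if p = 0 then (V.A i, nextV V.A V.u i)
      else if p = 1 then (V.B i, nextV V.B V.u i)
      else (V.C i, nextV V.C V.v i)

/-- Edge costs. -/
def ecost (n : ℕ) (a b c : Fin n → ℕ) : E n → ℚ
  | (_, none) => 1210 * (n : ℚ) ^ 2 * (2 * (beta n a b c : ℚ) + (Tsum n a b c : ℚ))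
  | (p, some i) =>
      if p = 0 then (beta n a b c : ℚ) + (a i : ℚ)
      else if p = 1 then (beta n a b c : ℚ) + (b i : ℚ)
      else (beta n a b c : ℚ) + (Tsum n a b c : ℚ) - (c i : ℚ)

/-- Vertex weights. -/
def wt (n : ℕ) : V n → ℚ
  | V.u => 10 * n
  | V.v => 11 * n
  | _ => 1

/-- The cut of `S`: edges with exactly one endpoint in `S`. -/
def cut (n : ℕ) (S : Finset (V n)) : Finset (E n) :=
  Finset.univ.filter fun e => ¬(((ends n e).1 ∈ S) ↔ ((ends n e).2 ∈ S))

def cutCost (n : ℕ) (a b c : Fin n → ℕ) (S : Finset (V n)) : ℚ :=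
  ∑ e ∈ cut n S, ecost n a b c e

def wOf (n : ℕ) (S : Finset (V n)) : ℚ := ∑ x ∈ S, wt n x

def quotientVal (n : ℕ) (a b c : Fin n → ℕ) (S : Finset (V n)) : ℚ :=
  cutCost n a b c S / min (wOf n S) (wOf n Sᶜ)

def sparsity (n : ℕ) (a b c : Fin n → ℕ) (S : Finset (V n)) : ℚ :=
  cutCost n a b c S / (wOf n S * wOf n Sᶜ)

def IsBisection (n : ℕ) (S : Finset (V n)) : Prop :=
  wOf n S = 12 * n ∧ wOf n Sᶜ = 12 * n

def PA (n : ℕ) : Finset (E n) := Finset.univ.filter fun e => e.1 = 0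
def PB (n : ℕ) : Finset (E n) := Finset.univ.filter fun e => e.1 = 1
def PC (n : ℕ) : Finset (E n) := Finset.univ.filter fun e => e.1 = 2

/-- A cut is "good" if it separates `u` from `v`, avoids `e_A, e_B, e_C`, and cuts exactly
one edge from each of `P_A, P_B, P_C`. -/
def GoodCut (n : ℕ) (S : Finset (V n)) : Prop :=
  ((V.u ∈ S) ↔ (V.v ∉ S))
  ∧ (((0 : Fin 3), (none : Option (Fin n))) ∉ cut n S
      ∧ ((1 : Fin 3), (none : Option (Fin n))) ∉ cut n S
      ∧ ((2 : Fin 3), (none : Option (Fin n))) ∉ cut n S)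
  ∧ ((cut n S ∩ PA n).card = 1 ∧ (cut n S ∩ PB n).card = 1 ∧ (cut n S ∩ PC n).card = 1)


section Aux
variable {n : ℕ}

/-- Vertex sequence of path `p`: positions `0, 1, ..., n+1`. -/
def seqP (n : ℕ) (p : Fin 3) : ℕ → V n
  | 0 => if p = 2 then V.u else V.v
  | (i+1) => if h : i < n then
      (if p = 0 then V.A ⟨i, h⟩ else if p = 1 then V.B ⟨i, h⟩ else V.C ⟨i, h⟩)
    else (if p = 2 then V.v else V.u)

lemma ends_none (hn : 0 < n) (p : Fin 3) :
    ends n (p, none) = (seqP n p 0, seqP n p 1) := by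
  fin_cases p <;> simp [ends, seqP, firstV, hn]

lemma ends_some (p : Fin 3) (i : Fin n) :
    ends n (p, some i) = (seqP n p (i.val + 1), seqP n p (i.val + 2)) := by
  have hi := i.isLt
  fin_cases p <;> simp [ends, seqP, nextV, hi]

lemma mem_cut {S : Finset (V n)} {e : E n} :
    e ∈ cut n S ↔ ¬(((ends n e).1 ∈ S) ↔ ((ends n e).2 ∈ S)) := by
  simp [cut]

end Aux
section Cross
variable {n : ℕ}

lemma chain_iff (f : ℕ → Prop) (j : ℕ) :
    ∀ k : ℕ, (∀ i, i < k → (f (j + i) ↔ f (j + i + 1))) → (f j ↔ f (j + k)) := by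
  intro k
  induction k with
  | zero => intro _; rfl
  | succ m ih =>
    intro h
    have h1 := ih (fun i hi => h i (by omega))
    have h2 := h m (by omega)
    rw [h1, show j + (m+1) = j + m + 1 by omega]
    exact h2

lemma exists_cross (f : ℕ → Prop) {j m : ℕ} (hjm : j ≤ m) (h : ¬(f j ↔ f m)) :
    ∃ i, j ≤ i ∧ i < m ∧ ¬(f i ↔ f (i + 1)) := by
  by_contra hc
  push_neg at hc
  exact h (by
    have := chain_iff f j (m - j) (fun i hi => hc (j + i) (by omega) (by omega))
    rwa [show j + (m - j) = m by omega] at this)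

/-- The set of crossing indices of path `p` w.r.t. `S`. -/
def crossSet (n : ℕ) (S : Finset (V n)) (p : Fin 3) : Finset ℕ :=
  (Finset.range (n+1)).filter (fun i => ¬(seqP n p i ∈ S ↔ seqP n p (i+1) ∈ S))

lemma one_le_crossSet_card {S : Finset (V n)} {p : Fin 3}
    (h : ¬(seqP n p 0 ∈ S ↔ seqP n p (n+1) ∈ S)) : 1 ≤ (crossSet n S p).card := by
  obtain ⟨i, hi1, hi2, hi3⟩ := exists_cross (fun i => seqP n p i ∈ S) (Nat.zero_le _) h
  refine Finset.card_pos.mpr ⟨i, ?_⟩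
  simp only [crossSet, Finset.mem_filter, Finset.mem_range]
  exact ⟨by omega, hi3⟩

lemma two_le_crossSet_card {S : Finset (V n)} {p : Fin 3} {j : ℕ} (hj : j ≤ n + 1)
    (h0 : ¬(seqP n p 0 ∈ S ↔ seqP n p j ∈ S))
    (h1 : ¬(seqP n p j ∈ S ↔ seqP n p (n+1) ∈ S)) : 2 ≤ (crossSet n S p).card := by
  obtain ⟨i1, hi11, hi12, hi13⟩ := exists_cross (fun i => seqP n p i ∈ S) (Nat.zero_le j) h0
  obtain ⟨i2, hi21, hi22, hi23⟩ := exists_cross (fun i => seqP n p i ∈ S) hj h1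
  have hmem : ∀ i, i < n + 1 → ¬(seqP n p i ∈ S ↔ seqP n p (i+1) ∈ S) → i ∈ crossSet n S p := by
    intro i h1 h2
    simp only [crossSet, Finset.mem_filter, Finset.mem_range]
    exact ⟨h1, h2⟩
  have h1m := hmem i1 (by omega) hi13
  have h2m := hmem i2 (by omega) hi23
  exact Finset.one_lt_card.mpr ⟨i1, h1m, i2, h2m, by omega⟩

/-- Card of the cut restricted to path `p` equals the number of crossings. -/
lemma card_cut_path (hn : 0 < n) (S : Finset (V n)) (p : Fin 3) :
    (crossSet n S p).card
      = ((cut n S) ∩ (Finset.univ.filter fun e : E n => e.1 = p)).card := by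
  apply Finset.card_bij
    (fun i hi => if h : i = 0 then ((p, none) : E n)
      else (p, some ⟨i - 1, by
        simp [crossSet, Finset.mem_range] at hi; omega⟩))
  · intro i hi
    simp only [crossSet, Finset.mem_filter, Finset.mem_range] at hi
    by_cases h : i = 0
    · subst h
      simp only [dif_pos]
      simp only [Finset.mem_inter, Finset.mem_filter, Finset.mem_univ, true_and, and_true]
      rw [mem_cut, ends_none hn]
      exact hi.2
    · simp only [dif_neg h]
      simp only [Finset.mem_inter, Finset.mem_filter, Finset.mem_univ, true_and, and_true]
      rw [mem_cut, ends_some]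
      simpa [show i - 1 + 1 = i by omega, show i - 1 + 2 = i + 1 by omega] using hi.2
  · intro i1 h1 i2 h2 heq
    by_cases e1 : i1 = 0 <;> by_cases e2 : i2 = 0 <;>
      simp [e1, e2] at heq ⊢ <;>
      first
        | omega
        | (simp only [crossSet, Finset.mem_filter, Finset.mem_range] at h1 h2
           have := Fin.mk.injEq (i1-1) (by omega) (i2-1) (by omega) ▸ heq
           omega)
  · intro e he
    simp only [Finset.mem_inter, Finset.mem_filter, Finset.mem_univ, true_and, and_true] at he
    obtain ⟨hc, hp⟩ := he
    obtain ⟨q, o⟩ := e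
    subst hp
    rw [mem_cut] at hc
    match o with
    | none =>
      refine ⟨0, ?_, by simp⟩
      rw [ends_none hn] at hc
      simp only [crossSet, Finset.mem_filter, Finset.mem_range]
      exact ⟨by omega, hc⟩
    | some i =>
      refine ⟨i.val + 1, ?_, by simp⟩
      rw [ends_some] at hc
      have := i.isLt
      simp only [crossSet, Finset.mem_filter, Finset.mem_range]
      exact ⟨by omega, hc⟩

end Cross
section Weights
variable {n : ℕ}

def vEquiv (n : ℕ) : V n ≃ (Bool ⊕ (Fin n ⊕ Fin n ⊕ Fin n)) where
  toFun x := match x with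
    | V.u => .inl true
    | V.v => .inl false
    | V.A i => .inr (.inl i)
    | V.B i => .inr (.inr (.inl i))
    | V.C i => .inr (.inr (.inr i))
  invFun y := match y with
    | .inl true => V.u
    | .inl false => V.v
    | .inr (.inl i) => V.A i
    | .inr (.inr (.inl i)) => V.B i
    | .inr (.inr (.inr i)) => V.C i
  left_inv := by rintro (_|_|i|i|i) <;> rfl
  right_inv := by rintro ((_|_)|(i|i|i)) <;> rfl

lemma wOf_univ : wOf n Finset.univ = 24 * n := by
  have h := Fintype.sum_equiv (vEquiv n).symm (fun y => wt n ((vEquiv n).symm y)) (wt n)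
    (fun y => rfl)
  have : wOf n Finset.univ = ∑ y : Bool ⊕ (Fin n ⊕ Fin n ⊕ Fin n), wt n ((vEquiv n).symm y) :=
    (h).symm
  rw [this]
  simp [Fintype.sum_sum_type, vEquiv, wt]
  ring

lemma wOf_add_compl (S : Finset (V n)) : wOf n S + wOf n Sᶜ = 24 * n := by
  rw [← wOf_univ (n := n)]
  exact (Finset.sum_add_sum_compl S (wt n)).symm ▸ rfl

lemma one_le_wt (hn : 0 < n) (x : V n) : 1 ≤ wt n x := by
  have : (1:ℚ) ≤ n := by exact_mod_cast hn
  cases x <;> simp [wt] <;> nlinarith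

lemma wt_nonneg (x : V n) : 0 ≤ wt n x := by
  cases x <;> simp [wt] <;> positivity

lemma wOf_nonneg (S : Finset (V n)) : 0 ≤ wOf n S :=
  Finset.sum_nonneg fun x _ => wt_nonneg x

lemma one_le_wOf (hn : 0 < n) {S : Finset (V n)} (hS : S.Nonempty) : 1 ≤ wOf n S := by
  obtain ⟨x, hx⟩ := hS
  calc (1:ℚ) ≤ wt n x := one_le_wt hn x
    _ ≤ wOf n S := Finset.single_le_sum (fun y _ => wt_nonneg y) hx

lemma wOf_le_total (S : Finset (V n)) : wOf n S ≤ 24 * n := by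
  have := wOf_add_compl S
  have := wOf_nonneg (n := n) Sᶜ
  linarith

lemma card_V : Fintype.card (V n) = 3 * n + 2 := by
  rw [Fintype.card_congr (vEquiv n)]
  simp; ring

lemma wOf_no_uv (S : Finset (V n)) (hu : V.u ∉ S) (hv : V.v ∉ S) : wOf n S ≤ 3 * n := by
  have hsub : S ⊆ Finset.univ \ {V.u, V.v} := by
    intro x hx
    simp only [Finset.mem_sdiff, Finset.mem_univ, true_and, Finset.mem_insert,
      Finset.mem_singleton]
    rintro (rfl | rfl) <;> [exact hu hx; exact hv hx]
  have hcard : S.card ≤ 3 * n := by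
    have h1 := Finset.card_le_card hsub
    have h2 : (Finset.univ \ ({V.u, V.v} : Finset (V n))).card = 3 * n := by
      rw [Finset.card_sdiff_of_subset (Finset.subset_univ _), Finset.card_univ, card_V]
      simp
    omega
  have hall : ∀ x ∈ S, wt n x = 1 := by
    intro x hx
    cases x with
    | u => exact absurd hx hu
    | v => exact absurd hx hv
    | A i => rfl
    | B i => rfl
    | C i => rfl
  calc wOf n S = ∑ _x ∈ S, (1:ℚ) := Finset.sum_congr rfl hall
    _ = S.card := by simp
    _ ≤ 3 * n := by exact_mod_cast hcard

end Weights

section Costs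
variable {n : ℕ} (a b c : Fin n → ℕ)

lemma c_le_T (i : Fin n) : (c i : ℚ) ≤ Tsum n a b c := by
  have : c i ≤ Tsum n a b c := by
    calc c i ≤ a i + b i + c i := by omega
      _ ≤ Tsum n a b c := Finset.single_le_sum (f := fun j => a j + b j + c j)
          (fun j _ => Nat.zero_le _) (Finset.mem_univ i)
  exact_mod_cast this

lemma a_le_T (i : Fin n) : (a i : ℚ) ≤ Tsum n a b c := by
  have : a i ≤ Tsum n a b c := by
    calc a i ≤ a i + b i + c i := by omega
      _ ≤ Tsum n a b c := Finset.single_le_sum (f := fun j => a j + b j + c j)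
          (fun j _ => Nat.zero_le _) (Finset.mem_univ i)
  exact_mod_cast this

lemma b_le_T (i : Fin n) : (b i : ℚ) ≤ Tsum n a b c := by
  have : b i ≤ Tsum n a b c := by
    calc b i ≤ a i + b i + c i := by omega
      _ ≤ Tsum n a b c := Finset.single_le_sum (f := fun j => a j + b j + c j)
          (fun j _ => Nat.zero_le _) (Finset.mem_univ i)
  exact_mod_cast this

lemma beta_le_ecost (hn : 0 < n) (e : E n) : (beta n a b c : ℚ) ≤ ecost n a b c e := by
  obtain ⟨p, o⟩ := e
  have hT : (0:ℚ) ≤ Tsum n a b c := by positivity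
  have hB : (0:ℚ) ≤ beta n a b c := by positivity
  have hn1 : (1:ℚ) ≤ n := by exact_mod_cast hn
  match o with
  | none =>
    simp only [ecost]
    have h2 : (1:ℚ) ≤ (n:ℚ)^2 := by nlinarith
    nlinarith [mul_le_mul_of_nonneg_right h2
      (show (0:ℚ) ≤ 2 * (beta n a b c : ℚ) + (Tsum n a b c : ℚ) by linarith)]
  | some i =>
    have hc := c_le_T a b c i
    have ha : (0:ℚ) ≤ a i := by positivity
    have hb : (0:ℚ) ≤ b i := by positivity
    simp only [ecost]
    split <;> [linarith; skip]
    split <;> linarith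

lemma ecost_nonneg (hn : 0 < n) (e : E n) : 0 ≤ ecost n a b c e :=
  le_trans (by positivity) (beta_le_ecost a b c hn e)

lemma cutCost_nonneg (hn : 0 < n) (S : Finset (V n)) : 0 ≤ cutCost n a b c S :=
  Finset.sum_nonneg fun e _ => ecost_nonneg a b c hn e

lemma card_le_cutCost (hn : 0 < n) (S : Finset (V n)) :
    ((cut n S).card : ℚ) * (beta n a b c : ℚ) ≤ cutCost n a b c S := by
  calc ((cut n S).card : ℚ) * (beta n a b c : ℚ)
      = ∑ _e ∈ cut n S, (beta n a b c : ℚ) := by rw [Finset.sum_const]; simp [mul_comm]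
    _ ≤ cutCost n a b c S := Finset.sum_le_sum fun e _ => beta_le_ecost a b c hn e

lemma ecost_le_cutCost (hn : 0 < n) {S : Finset (V n)} {e : E n} (he : e ∈ cut n S) :
    ecost n a b c e ≤ cutCost n a b c S :=
  Finset.single_le_sum (fun f _ => ecost_nonneg a b c hn f) he

end Costs
section S0sec
variable {n : ℕ} (a b c : Fin n → ℕ)

def inS0 {n : ℕ} : V n → Bool
  | V.u => false
  | V.C _ => false
  | _ => true

def S0 (n : ℕ) : Finset (V n) := Finset.univ.filter fun x => inS0 x = true

@[simp] lemma mem_S0 {x : V n} : x ∈ S0 n ↔ inS0 x = true := by simp [S0]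

lemma S0_nonempty : (S0 n).Nonempty := ⟨V.v, by simp [inS0]⟩

lemma S0_ne_univ : S0 n ≠ Finset.univ := by
  intro h
  have : (V.u : V n) ∈ S0 n := h ▸ Finset.mem_univ _
  simp [inS0] at this

lemma wOf_S0 : wOf n (S0 n) = 13 * n := by
  have h1 : wOf n (S0 n) = ∑ x : V n, (if inS0 x then wt n x else 0) := by
    rw [wOf, S0, Finset.sum_filter]
  rw [h1, ← Fintype.sum_equiv (vEquiv n).symm
    (fun y => if inS0 ((vEquiv n).symm y) then wt n ((vEquiv n).symm y) else 0)
    (fun x => if inS0 x then wt n x else 0) (fun y => rfl)]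
  simp [Fintype.sum_sum_type, vEquiv, inS0, wt]
  ring

lemma wOf_S0c : wOf n (S0 n)ᶜ = 11 * n := by
  have h := wOf_add_compl (S0 n)
  rw [wOf_S0] at h
  linarith

lemma cut_S0_subset (hn : 0 < n) :
    cut n (S0 n) ⊆
      ({((0 : Fin 3), some (⟨n-1, by omega⟩ : Fin n)),
        ((1 : Fin 3), some (⟨n-1, by omega⟩ : Fin n)),
        ((2 : Fin 3), some (⟨n-1, by omega⟩ : Fin n))} : Finset (E n)) := by
  rintro ⟨p, o⟩ he
  rw [mem_cut] at he
  rcases o with _ | i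
  · exfalso
    fin_cases p <;> simp [ends, firstV, hn, inS0] at he
  · have hi := i.isLt
    have hkey : i = (⟨n-1, by omega⟩ : Fin n) := by
      by_contra hne
      have hlt : i.val + 1 < n := by
        rcases Nat.lt_or_ge (i.val + 1) n with h | h
        · exact h
        · exact absurd (Fin.ext (by simp only [Fin.val_mk]; omega)) hne
      fin_cases p <;> simp [ends, nextV, hlt, inS0] at he
    rw [hkey]
    fin_cases p <;> simp

lemma cutCost_S0_le (hn : 0 < n) :
    cutCost n a b c (S0 n) ≤ 3 * ((beta n a b c : ℚ) + (Tsum n a b c : ℚ)) := by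
  have hsub := cut_S0_subset (n := n) hn
  have h1 : cutCost n a b c (S0 n)
      ≤ ∑ e ∈ ({((0 : Fin 3), some (⟨n-1, by omega⟩ : Fin n)),
        ((1 : Fin 3), some (⟨n-1, by omega⟩ : Fin n)),
        ((2 : Fin 3), some (⟨n-1, by omega⟩ : Fin n))} : Finset (E n)), ecost n a b c e :=
    Finset.sum_le_sum_of_subset_of_nonneg hsub (fun e _ _ => ecost_nonneg a b c hn e)
  have h2 : ∑ e ∈ ({((0 : Fin 3), some (⟨n-1, by omega⟩ : Fin n)),
        ((1 : Fin 3), some (⟨n-1, by omega⟩ : Fin n)),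
        ((2 : Fin 3), some (⟨n-1, by omega⟩ : Fin n))} : Finset (E n)), ecost n a b c e
      = ecost n a b c ((0 : Fin 3), some (⟨n-1, by omega⟩ : Fin n))
        + ecost n a b c ((1 : Fin 3), some (⟨n-1, by omega⟩ : Fin n))
        + ecost n a b c ((2 : Fin 3), some (⟨n-1, by omega⟩ : Fin n)) := by
    rw [Finset.sum_insert (by simp), Finset.sum_insert (by simp), Finset.sum_singleton]
    ring
  have ha' := a_le_T a b c (⟨n-1, by omega⟩ : Fin n)
  have hb' := b_le_T a b c (⟨n-1, by omega⟩ : Fin n)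
  have hc' : (0:ℚ) ≤ (c (⟨n-1, by omega⟩ : Fin n) : ℚ) := by positivity
  rw [h2] at h1
  simp only [ecost, show ((2:Fin 3) = 0) = False by simp, show ((2:Fin 3) = 1) = False by simp,
    if_false] at h1
  norm_num at h1
  linarith

end S0sec
section Master
variable {n : ℕ} (a b c : Fin n → ℕ)

lemma seqP_zero (p : Fin 3) : seqP n p 0 = if p = 2 then V.u else V.v := rfl

lemma seqP_top (p : Fin 3) : seqP n p (n+1) = if p = 2 then V.v else V.u := by
  simp [seqP]

lemma seqP_mid (p : Fin 3) (j : Fin n) :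
    seqP n p (j.val + 1) = if p = 0 then V.A j else if p = 1 then V.B j else V.C j := by
  simp [seqP, j.isLt]

lemma fin3_cases (p : Fin 3) : p = 0 ∨ p = 1 ∨ p = 2 := by omega

lemma cut_card_decomp (S : Finset (V n)) :
    (cut n S).card = (cut n S ∩ PA n).card + (cut n S ∩ PB n).card + (cut n S ∩ PC n).card := by
  have hU : (cut n S ∩ PA n) ∪ (cut n S ∩ PB n) ∪ (cut n S ∩ PC n) = cut n S := by
    ext e
    simp only [Finset.mem_union, Finset.mem_inter, PA, PB, PC, Finset.mem_filter,
      Finset.mem_univ, true_and]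
    constructor
    · rintro ((⟨h, _⟩ | ⟨h, _⟩) | ⟨h, _⟩) <;> exact h
    · intro h
      rcases fin3_cases e.1 with h1 | h1 | h1 <;> tauto
  have d1 : Disjoint (cut n S ∩ PA n) (cut n S ∩ PB n) := by
    rw [Finset.disjoint_left]
    intro e he1 he2
    simp only [Finset.mem_inter, PA, PB, Finset.mem_filter] at he1 he2
    rw [he1.2.2] at he2
    exact absurd he2.2.2 (by decide)
  have d2 : Disjoint ((cut n S ∩ PA n) ∪ (cut n S ∩ PB n)) (cut n S ∩ PC n) := by
    rw [Finset.disjoint_left]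
    intro e he1 he2
    simp only [Finset.mem_union, Finset.mem_inter, PA, PB, PC, Finset.mem_filter] at he1 he2
    rcases he1 with ⟨_, h⟩ | ⟨_, h⟩ <;> rw [h.2] at he2 <;> exact absurd he2.2.2 (by decide)
  calc (cut n S).card = ((cut n S ∩ PA n) ∪ (cut n S ∩ PB n) ∪ (cut n S ∩ PC n)).card := by
        rw [hU]
    _ = _ := by rw [Finset.card_union_of_disjoint d2, Finset.card_union_of_disjoint d1]

lemma two_le_aux (hn : 0 < n) {S : Finset (V n)} {p : Fin 3} {j : Fin n}
    (h0 : ¬(seqP n p 0 ∈ S ↔ seqP n p (j.val + 1) ∈ S))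
    (h1 : ¬(seqP n p (j.val + 1) ∈ S ↔ seqP n p (n + 1) ∈ S)) : 2 ≤ (cut n S).card := by
  have h2 := two_le_crossSet_card (j := j.val + 1) (by have := j.isLt; omega) h0 h1
  rw [card_cut_path hn S p] at h2
  exact le_trans h2 (Finset.card_le_card Finset.inter_subset_left)

lemma two_le_cut_card_of_same_side (hn : 0 < n) {S : Finset (V n)}
    (hS : S.Nonempty) (hSc : Sᶜ.Nonempty)
    (huv : (V.u ∈ S ∧ V.v ∈ S) ∨ (V.u ∉ S ∧ V.v ∉ S)) : 2 ≤ (cut n S).card := by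
  rcases huv with ⟨hu, hv⟩ | ⟨hu, hv⟩
  · obtain ⟨x, hxc⟩ := hSc
    have hxS : x ∉ S := by simpa using hxc
    cases x with
    | u => exact absurd hu hxS
    | v => exact absurd hv hxS
    | A j =>
      exact two_le_aux hn (p := 0) (j := j)
        (by simp [seqP_zero, seqP_mid]; tauto) (by simp [seqP_mid, seqP_top]; tauto)
    | B j =>
      exact two_le_aux hn (p := 1) (j := j)
        (by simp [seqP_zero, seqP_mid]; tauto) (by simp [seqP_mid, seqP_top]; tauto)
    | C j =>
      exact two_le_aux hn (p := 2) (j := j)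
        (by simp [seqP_zero, seqP_mid]; tauto) (by simp [seqP_mid, seqP_top]; tauto)
  · obtain ⟨x, hxS⟩ := hS
    cases x with
    | u => exact absurd hxS hu
    | v => exact absurd hxS hv
    | A j =>
      exact two_le_aux hn (p := 0) (j := j)
        (by simp [seqP_zero, seqP_mid]; tauto) (by simp [seqP_mid, seqP_top]; tauto)
    | B j =>
      exact two_le_aux hn (p := 1) (j := j)
        (by simp [seqP_zero, seqP_mid]; tauto) (by simp [seqP_mid, seqP_top]; tauto)
    | C j =>
      exact two_le_aux hn (p := 2) (j := j)
        (by simp [seqP_zero, seqP_mid]; tauto) (by simp [seqP_mid, seqP_top]; tauto)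

lemma one_le_Tsum (hn : 0 < n) (ha : ∀ i, 0 < a i) : 1 ≤ Tsum n a b c := by
  have i0 : Fin n := ⟨0, hn⟩
  calc 1 ≤ a i0 + b i0 + c i0 := by have := ha i0; omega
    _ ≤ Tsum n a b c := Finset.single_le_sum (f := fun j => a j + b j + c j)
        (fun j _ => Nat.zero_le _) (Finset.mem_univ i0)

lemma beta_cast : (beta n a b c : ℚ) = 4 * (Tsum n a b c : ℚ) * (n : ℚ)^2 := by
  simp only [beta]; push_cast; ring

/-- Master: separation + cost below `4β` implies the good cut structure. -/
lemma good_of (hn : 1 < n) (hT1 : 1 ≤ Tsum n a b c) {S : Finset (V n)}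
    (hsep : V.u ∈ S ↔ V.v ∉ S)
    (hcost : cutCost n a b c S < 4 * (beta n a b c : ℚ)) : GoodCut n S := by
  have hn0 : 0 < n := by omega
  have hn2 : (2:ℚ) ≤ (n:ℚ) := by exact_mod_cast hn
  have hT1' : (1:ℚ) ≤ (Tsum n a b c : ℚ) := by exact_mod_cast hT1
  have hβ : (beta n a b c : ℚ) = 4 * (Tsum n a b c : ℚ) * (n : ℚ)^2 := beta_cast a b c
  have hnn : (4:ℚ) ≤ (n:ℚ)^2 := by nlinarith
  have hβ16 : 16 * (Tsum n a b c : ℚ) ≤ (beta n a b c : ℚ) := by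
    nlinarith [mul_le_mul_of_nonneg_left hnn (show (0:ℚ) ≤ 4 * (Tsum n a b c : ℚ) by linarith)]
  have hβ0 : (0:ℚ) < (beta n a b c : ℚ) := by linarith
  -- card bound
  have hcard : (cut n S).card ≤ 3 := by
    by_contra h
    push_neg at h
    have h4 : (4:ℚ) ≤ ((cut n S).card : ℚ) := by exact_mod_cast h
    have := card_le_cutCost a b c hn0 S
    nlinarith
  -- no special edges
  have hspec : ∀ p : Fin 3, (p, (none : Option (Fin n))) ∉ cut n S := by
    intro p hp
    have h1 := ecost_le_cutCost a b c hn0 hp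
    have h2 : ecost n a b c (p, none)
        = 1210 * (n : ℚ) ^ 2 * (2 * (beta n a b c : ℚ) + (Tsum n a b c : ℚ)) := rfl
    rw [h2] at h1
    nlinarith [mul_le_mul_of_nonneg_left hnn
      (show (0:ℚ) ≤ 2 * (beta n a b c : ℚ) + (Tsum n a b c : ℚ) by linarith)]
  -- separation gives at least one crossing per path
  have hone : ∀ p : Fin 3,
      1 ≤ ((cut n S) ∩ (Finset.univ.filter fun e : E n => e.1 = p)).card := by
    intro p
    rw [← card_cut_path hn0 S p]
    apply one_le_crossSet_card
    rw [seqP_zero, seqP_top]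
    rcases fin3_cases p with h | h | h <;> subst h
    · rw [if_neg (by decide), if_neg (by decide)]; tauto
    · rw [if_neg (by decide), if_neg (by decide)]; tauto
    · rw [if_pos rfl, if_pos rfl]; tauto
  have h0 := hone 0
  have h1 := hone 1
  have h2 := hone 2
  have hPA : PA n = Finset.univ.filter (fun e : E n => e.1 = 0) := rfl
  have hPB : PB n = Finset.univ.filter (fun e : E n => e.1 = 1) := rfl
  have hPC : PC n = Finset.univ.filter (fun e : E n => e.1 = 2) := rfl
  have hdec := cut_card_decomp S
  rw [← hPA] at h0; rw [← hPB] at h1; rw [← hPC] at h2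
  refine ⟨hsep, ⟨hspec 0, hspec 1, hspec 2⟩, ?_, ?_, ?_⟩ <;> omega

end Master
/-- Every minimum-quotient cut and every minimum-sparsity cut separates `u` from `v`,
avoids `e_A, e_B, e_C`, and cuts exactly one edge from each of `P_A, P_B, P_C`. -/
theorem min_quotient_and_sparsest_cut_structure (n : ℕ) (hn : 1 < n) (a b c : Fin n → ℕ)
    (ha : ∀ i, 0 < a i) (hb : ∀ i, 0 < b i) (hc : ∀ i, 0 < c i) :
    (∀ S : Finset (V n), S.Nonempty → S ≠ Finset.univ →
      (∀ S' : Finset (V n), S'.Nonempty → S' ≠ Finset.univ →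
        quotientVal n a b c S ≤ quotientVal n a b c S') →
      GoodCut n S)
    ∧ (∀ S : Finset (V n), S.Nonempty → S ≠ Finset.univ →
      (∀ S' : Finset (V n), S'.Nonempty → S' ≠ Finset.univ →
        sparsity n a b c S ≤ sparsity n a b c S') →
      GoodCut n S) := by
  have hn0 : 0 < n := by omega
  have hT1 : 1 ≤ Tsum n a b c := one_le_Tsum a b c hn0 ha
  have hn2 : (2:ℚ) ≤ (n:ℚ) := by exact_mod_cast hn
  have hnq : (0:ℚ) < (n:ℚ) := by linarith
  have hT1' : (1:ℚ) ≤ (Tsum n a b c : ℚ) := by exact_mod_cast hT1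
  have hβ : (beta n a b c : ℚ) = 4 * (Tsum n a b c : ℚ) * (n : ℚ)^2 := beta_cast a b c
  have hnn : (4:ℚ) ≤ (n:ℚ)^2 := by nlinarith
  have hβ16 : 16 * (Tsum n a b c : ℚ) ≤ (beta n a b c : ℚ) := by
    nlinarith [mul_le_mul_of_nonneg_left hnn (show (0:ℚ) ≤ 4 * (Tsum n a b c : ℚ) by linarith)]
  have hβ0 : (0:ℚ) < (beta n a b c : ℚ) := by linarith
  have hc0 := cutCost_S0_le a b c hn0
  have h3βT : (0:ℚ) ≤ 3 * ((beta n a b c : ℚ) + (Tsum n a b c : ℚ)) := by linarith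
  constructor
  · -- quotient case
    intro S hS hSu hmin
    have hScne : Sᶜ.Nonempty := by
      obtain ⟨x, hx⟩ : ∃ x, x ∉ S := by
        by_contra h
        push_neg at h
        exact hSu (Finset.eq_univ_iff_forall.mpr h)
      exact ⟨x, Finset.mem_compl.mpr hx⟩
    have hw1 : 1 ≤ wOf n S := one_le_wOf hn0 hS
    have hw2 : 1 ≤ wOf n Sᶜ := one_le_wOf hn0 hScne
    have hsum := wOf_add_compl S
    have hm1 : (1:ℚ) ≤ min (wOf n S) (wOf n Sᶜ) := le_min hw1 hw2
    have hm12 : min (wOf n S) (wOf n Sᶜ) ≤ 12*(n:ℚ) := by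
      have h1 := min_le_left (wOf n S) (wOf n Sᶜ)
      have h2 := min_le_right (wOf n S) (wOf n Sᶜ)
      linarith
    have hq0 := hmin (S0 n) S0_nonempty S0_ne_univ
    rw [quotientVal, quotientVal, wOf_S0, wOf_S0c,
      min_eq_right (by linarith : 11*(n:ℚ) ≤ 13*n)] at hq0
    rw [div_le_div_iff₀ (by linarith) (by linarith : (0:ℚ) < 11*(n:ℚ))] at hq0
    -- cost(S) * 11 ≤ 36 (β+T)
    have h1 : cutCost n a b c S * (11*(n:ℚ))
        ≤ (3 * ((beta n a b c : ℚ) + (Tsum n a b c : ℚ))) * (12*(n:ℚ)) :=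
      le_trans hq0 (mul_le_mul hc0 hm12 (by linarith) h3βT)
    have h1' : (cutCost n a b c S * 11) * (n:ℚ)
        ≤ (36 * ((beta n a b c : ℚ) + (Tsum n a b c : ℚ))) * (n:ℚ) := by
      ring_nf; ring_nf at h1; linarith
    have hkey := le_of_mul_le_mul_right h1' hnq
    have hcost4 : cutCost n a b c S < 4 * (beta n a b c : ℚ) := by linarith
    have hsep : V.u ∈ S ↔ V.v ∉ S := by
      by_contra hns
      have huv : (V.u ∈ S ∧ V.v ∈ S) ∨ (V.u ∉ S ∧ V.v ∉ S) := by tauto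
      have h2c := two_le_cut_card_of_same_side hn0 hS hScne huv
      have h2b : 2 * (beta n a b c : ℚ) ≤ cutCost n a b c S := by
        have hcc := card_le_cutCost a b c hn0 S
        have h2q : (2:ℚ) ≤ ((cut n S).card : ℚ) := by exact_mod_cast h2c
        have := mul_le_mul_of_nonneg_right h2q hβ0.le
        linarith
      have hm3 : min (wOf n S) (wOf n Sᶜ) ≤ 3*(n:ℚ) := by
        rcases huv with ⟨hu, hv⟩ | ⟨hu, hv⟩
        · exact le_trans (min_le_right _ _)
            (wOf_no_uv Sᶜ (by simp [hu]) (by simp [hv]))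
        · exact le_trans (min_le_left _ _) (wOf_no_uv S hu hv)
      have h1b : cutCost n a b c S * (11*(n:ℚ))
          ≤ (3 * ((beta n a b c : ℚ) + (Tsum n a b c : ℚ))) * (3*(n:ℚ)) :=
        le_trans hq0 (mul_le_mul hc0 hm3 (by linarith) h3βT)
      have h1b' : (cutCost n a b c S * 11) * (n:ℚ)
          ≤ (9 * ((beta n a b c : ℚ) + (Tsum n a b c : ℚ))) * (n:ℚ) := by
        ring_nf; ring_nf at h1b; linarith
      have h2 := le_of_mul_le_mul_right h1b' hnq
      linarith
    exact good_of a b c hn hT1 hsep hcost4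
  · -- sparsity case
    intro S hS hSu hmin
    have hScne : Sᶜ.Nonempty := by
      obtain ⟨x, hx⟩ : ∃ x, x ∉ S := by
        by_contra h
        push_neg at h
        exact hSu (Finset.eq_univ_iff_forall.mpr h)
      exact ⟨x, Finset.mem_compl.mpr hx⟩
    have hw1 : 1 ≤ wOf n S := one_le_wOf hn0 hS
    have hw2 : 1 ≤ wOf n Sᶜ := one_le_wOf hn0 hScne
    have hsum := wOf_add_compl S
    have hP1 : (0:ℚ) < wOf n S * wOf n Sᶜ := by nlinarith
    have hP144 : wOf n S * wOf n Sᶜ ≤ 144*(n:ℚ)^2 := by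
      nlinarith [sq_nonneg (wOf n S - wOf n Sᶜ)]
    have hq0 := hmin (S0 n) S0_nonempty S0_ne_univ
    rw [sparsity, sparsity, wOf_S0, wOf_S0c] at hq0
    rw [div_le_div_iff₀ hP1 (by nlinarith : (0:ℚ) < 13*(n:ℚ) * (11*(n:ℚ)))] at hq0
    have h1 : cutCost n a b c S * (13*(n:ℚ) * (11*(n:ℚ)))
        ≤ (3 * ((beta n a b c : ℚ) + (Tsum n a b c : ℚ))) * (144*(n:ℚ)^2) :=
      le_trans hq0 (mul_le_mul hc0 hP144 (by linarith) h3βT)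
    have h1' : (cutCost n a b c S * 143) * ((n:ℚ)^2)
        ≤ (432 * ((beta n a b c : ℚ) + (Tsum n a b c : ℚ))) * ((n:ℚ)^2) := by
      ring_nf; ring_nf at h1; linarith
    have hkey := le_of_mul_le_mul_right h1' (pow_pos hnq 2)
    have hcost4 : cutCost n a b c S < 4 * (beta n a b c : ℚ) := by linarith
    have hsep : V.u ∈ S ↔ V.v ∉ S := by
      by_contra hns
      have huv : (V.u ∈ S ∧ V.v ∈ S) ∨ (V.u ∉ S ∧ V.v ∉ S) := by tauto
      have h2c := two_le_cut_card_of_same_side hn0 hS hScne huv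
      have h2b : 2 * (beta n a b c : ℚ) ≤ cutCost n a b c S := by
        have hcc := card_le_cutCost a b c hn0 S
        have h2q : (2:ℚ) ≤ ((cut n S).card : ℚ) := by exact_mod_cast h2c
        have := mul_le_mul_of_nonneg_right h2q hβ0.le
        linarith
      have hP72 : wOf n S * wOf n Sᶜ ≤ 72*(n:ℚ)^2 := by
        rcases huv with ⟨hu, hv⟩ | ⟨hu, hv⟩
        · have hsm := wOf_no_uv Sᶜ (by simp [hu]) (by simp [hv])
          have htot := wOf_le_total S
          calc wOf n S * wOf n Sᶜ ≤ (24*(n:ℚ)) * (3*(n:ℚ)) :=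
                mul_le_mul htot hsm (by linarith) (by linarith)
            _ = 72*(n:ℚ)^2 := by ring
        · have hsm := wOf_no_uv S hu hv
          have htot := wOf_le_total Sᶜ
          calc wOf n S * wOf n Sᶜ ≤ (3*(n:ℚ)) * (24*(n:ℚ)) :=
                mul_le_mul hsm htot (by linarith) (by linarith)
            _ = 72*(n:ℚ)^2 := by ring
      have h1b : cutCost n a b c S * (13*(n:ℚ) * (11*(n:ℚ)))
          ≤ (3 * ((beta n a b c : ℚ) + (Tsum n a b c : ℚ))) * (72*(n:ℚ)^2) :=
        le_trans hq0 (mul_le_mul hc0 hP72 (by linarith) h3βT)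
      have h1b' : (cutCost n a b c S * 143) * ((n:ℚ)^2)
          ≤ (216 * ((beta n a b c : ℚ) + (Tsum n a b c : ℚ))) * ((n:ℚ)^2) := by
        ring_nf; ring_nf at h1b; linarith
      have h2 := le_of_mul_le_mul_right h1b' (pow_pos hnq 2)
      linarith
    exact good_of a b c hn hT1 hsep hcost4

end SCLB
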